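/- Type-based universal simulation from i.i.d. finite sources: Let 𝒳 be a finite set and Q_Y a continuous (atomless) probability measure on ℝ. There exists, for each n, a function f_n : 𝒳^n → ℝ, constructed without knowledge of P_X, such that for every probability mass function P_X on 𝒳, the output Y = f_n(X^n) with X^n ∼ P_X^n satisfies |P_Y − Q_Y|_KS ≤ (1/2)(n+1)^{|𝒳|}·(max_x P_X(x))^n. -/

import Mathlib

open MeasureTheory Set

noncomputable def cdfR (μ : Measure ℝ) (x : ℝ) : ℝ := (μ (Set.Iic x)).toReal

noncomputable def KSdist (μ ν : Measure ℝ) : ℝ := ⨆ x : ℝ, |cdfR μ x - cdfR ν x|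

section Quantile

variable (Q : Measure ℝ) [IsProbabilityMeasure Q]

lemma cdfR_eq_cdf : cdfR Q = ProbabilityTheory.cdf Q := by
  funext x
  rw [cdfR, ProbabilityTheory.cdf_eq_real, measureReal_def]

lemma monotone_cdfR : Monotone (cdfR Q) := by
  rw [cdfR_eq_cdf]; exact ProbabilityTheory.monotone_cdf Q

lemma cdfR_nonneg (x : ℝ) : 0 ≤ cdfR Q x := ENNReal.toReal_nonneg

lemma cdfR_le_one (x : ℝ) : cdfR Q x ≤ 1 := by
  rw [cdfR]
  refine ENNReal.toReal_le_of_le_ofReal one_pos.le ?_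
  simpa using prob_le_one (μ := Q) (s := Set.Iic x)

lemma continuous_cdfR [NullSingletonClass Q] : Continuous (cdfR Q) := by
  rw [cdfR_eq_cdf]
  rw [continuous_iff_continuousAt]
  intro a
  rw [(ProbabilityTheory.monotone_cdf Q).continuousAt_iff_leftLim_eq_rightLim]
  rw [(ProbabilityTheory.cdf Q).rightLim_eq]
  have hsing : (ProbabilityTheory.cdf Q).measure {a} = 0 := by
    rw [ProbabilityTheory.measure_cdf]; exact measure_singleton a
  rw [StieltjesFunction.measure_singleton] at hsing
  rw [ENNReal.ofReal_eq_zero] at hsing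
  have h2 := (ProbabilityTheory.monotone_cdf Q).leftLim_le (le_refl a)
  linarith

lemma exists_cdfR_eq [NullSingletonClass Q] {p : ℝ} (hp0 : 0 < p) (hp1 : p < 1) :
    ∃ x, cdfR Q x = p := by
  have hbot : Filter.Tendsto (cdfR Q) Filter.atBot (nhds 0) := by
    rw [cdfR_eq_cdf]; exact ProbabilityTheory.tendsto_cdf_atBot Q
  have htop : Filter.Tendsto (cdfR Q) Filter.atTop (nhds 1) := by
    rw [cdfR_eq_cdf]; exact ProbabilityTheory.tendsto_cdf_atTop Q
  obtain ⟨a, ha⟩ := (hbot.eventually (eventually_lt_nhds hp0)).exists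
  obtain ⟨b, hb⟩ := (htop.eventually (eventually_gt_nhds hp1)).exists
  have hab : a ≤ b := by
    by_contra h
    push_neg at h
    exact absurd (monotone_cdfR Q h.le) (by linarith)
  have := intermediate_value_Icc hab (continuous_cdfR Q).continuousOn
  obtain ⟨x, _, hx⟩ := this ⟨ha.le, hb.le⟩
  exact ⟨x, hx⟩

noncomputable def quantile' (Q : Measure ℝ) (p : ℝ) : ℝ :=
  open Classical in
  if h : ∃ x, cdfR Q x = p then h.choose else 0

lemma cdfR_quantile [NullSingletonClass Q] {p : ℝ} (hp0 : 0 < p) (hp1 : p < 1) :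
    cdfR Q (quantile' Q p) = p := by
  have h := exists_cdfR_eq Q hp0 hp1
  rw [quantile', dif_pos h]
  exact h.choose_spec

end Quantile


/-- Counting via rank: for an injective `g : α → ℕ` and a finset `T`, the rank map
`y ↦ #{z ∈ T | g z < g y}` is a bijection from `T` to `range T.card`, hence counting
elements of `T` whose rank satisfies `p` equals counting `k < T.card` with `p k`. -/
lemma count_rank {α : Type*} (g : α → ℕ) (hg : Function.Injective g) (T : Finset α)
    (p : ℕ → Prop) [DecidablePred p] [DecidableEq α] :
    (T.filter (fun y => p ((T.filter (fun z => g z < g y)).card))).card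
      = ((Finset.range T.card).filter p).card := by
  set r : α → ℕ := fun y => (T.filter (fun z => g z < g y)).card with hr
  have hmono : ∀ y ∈ T, ∀ z ∈ T, g y < g z → r y < r z := by
    intro y hy z hz hyz
    apply Finset.card_lt_card
    constructor
    · intro w hw
      simp only [Finset.mem_filter] at hw ⊢
      exact ⟨hw.1, hw.2.trans hyz⟩
    · intro hsub
      have : y ∈ T.filter (fun w => g w < g z) := by
        simp [hy, hyz]
      have := hsub this
      simp at this
  have hinj : Set.InjOn r T := by
    intro y hy z hz hyz
    by_contra hne
    rcases lt_trichotomy (g y) (g z) with h | h | h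
    · exact absurd hyz (hmono y hy z hz h).ne
    · exact hne (hg h)
    · exact absurd hyz.symm (hmono z hz y hy h).ne
  have himage : T.image r = Finset.range T.card := by
    apply Finset.eq_of_subset_of_card_le
    · intro k hk
      simp only [Finset.mem_image] at hk
      obtain ⟨y, hy, hky⟩ := hk
      rw [Finset.mem_range, ← hky]
      have hsub : T.filter (fun z => g z < g y) ⊆ T.erase y := by
        intro w hw
        simp only [Finset.mem_filter] at hw
        exact Finset.mem_erase.mpr ⟨fun h => absurd (congrArg g h) hw.2.ne, hw.1⟩
      calc r y ≤ (T.erase y).card := Finset.card_le_card hsub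
        _ < T.card := Finset.card_erase_lt_of_mem hy
    · rw [Finset.card_range, Finset.card_image_of_injOn hinj]
  calc (T.filter (fun y => p (r y))).card
      = ((T.filter (fun y => p (r y))).image r).card := by
        rw [Finset.card_image_of_injOn (hinj.mono (fun y hy => (Finset.mem_filter.mp hy).1))]
    _ = ((T.image r).filter p).card := by rw [Finset.filter_image]
    _ = ((Finset.range T.card).filter p).card := by rw [himage]

lemma count_quantile (Q : Measure ℝ) [IsProbabilityMeasure Q] [NullSingletonClass Q] (x0 : ℝ)
    {m : ℕ} (hm : 0 < m) (p : ℕ → Prop) [DecidablePred p]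
    (hp : ∀ k, p k ↔ quantile' Q ((2 * k + 1) / (2 * m)) ≤ x0) :
    |(((Finset.range m).filter p).card : ℝ) - m * cdfR Q x0| ≤ 1 / 2 := by
  set F := cdfR Q x0 with hF
  have hF0 : 0 ≤ F := cdfR_nonneg Q x0
  have hF1 : F ≤ 1 := cdfR_le_one Q x0
  have hm' : (0 : ℝ) < m := by exact_mod_cast hm
  have hqk : ∀ k < m, cdfR Q (quantile' Q ((2 * k + 1) / (2 * m))) = (2 * k + 1) / (2 * m) := by
    intro k hk
    apply cdfR_quantile
    · positivity
    · rw [div_lt_one (by positivity)]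
      have : (k : ℝ) + 1 ≤ m := by exact_mod_cast hk
      linarith
  set c := ((Finset.range m).filter p).card with hc
  have hupper : (c : ℝ) ≤ m * F + 1 / 2 := by
    have hsub : (Finset.range m).filter p ⊆ Finset.range (Nat.floor (m * F + 1 / 2)) := by
      intro k hk
      rw [Finset.mem_filter, Finset.mem_range] at hk
      obtain ⟨hkm, hpk⟩ := hk
      rw [hp k] at hpk
      have h1 : (2 * k + 1) / (2 * m) ≤ F := by
        rw [← hqk k hkm]
        exact monotone_cdfR Q hpk
      rw [div_le_iff₀ (by positivity)] at h1
      have h2 : (k : ℝ) + 1 ≤ m * F + 1 / 2 := by nlinarith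
      rw [Finset.mem_range]
      have := Nat.le_floor (by exact_mod_cast h2 : ((k + 1 : ℕ) : ℝ) ≤ m * F + 1 / 2)
      omega
    calc (c : ℝ) ≤ (Nat.floor (m * F + 1 / 2) : ℝ) := by
          exact_mod_cast (Finset.card_le_card hsub).trans_eq (Finset.card_range _)
      _ ≤ m * F + 1 / 2 := Nat.floor_le (by positivity)
  have hlower : m * F - 1 / 2 ≤ (c : ℝ) := by
    set t : ℝ := m * F - 1 / 2 with ht
    rcases le_or_gt t 0 with h | h
    · calc t ≤ 0 := h
        _ ≤ (c : ℝ) := Nat.cast_nonneg c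
    · have hsub : Finset.range (min m (Nat.ceil t)) ⊆ (Finset.range m).filter p := by
        intro k hk
        rw [Finset.mem_range, lt_min_iff] at hk
        obtain ⟨hkm, hkt⟩ := hk
        have hkt' : (k : ℝ) < t := by
          have h1 : (k : ℝ) + 1 ≤ Nat.ceil t := by exact_mod_cast hkt
          have h2 : (Nat.ceil t : ℝ) < t + 1 := Nat.ceil_lt_add_one h.le
          linarith
        rw [Finset.mem_filter, Finset.mem_range, hp k]
        refine ⟨hkm, ?_⟩
        by_contra hqx
        push_neg at hqx
        have h1 : F ≤ (2 * k + 1) / (2 * m) := by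
          rw [← hqk k hkm]
          exact monotone_cdfR Q hqx.le
        rw [le_div_iff₀ (by positivity)] at h1
        rw [ht] at hkt'
        nlinarith
      have h1 : min m (Nat.ceil t) ≤ c := by
        calc min m (Nat.ceil t) = (Finset.range (min m (Nat.ceil t))).card := (Finset.card_range _).symm
          _ ≤ c := Finset.card_le_card hsub
      have h2 : t ≤ ((min m (Nat.ceil t) : ℕ) : ℝ) := by
        push_cast [Nat.cast_min]
        refine le_min ?_ (Nat.le_ceil t)
        rw [ht]
        nlinarith
      calc t ≤ ((min m (Nat.ceil t) : ℕ) : ℝ) := h2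
        _ ≤ (c : ℝ) := by exact_mod_cast h1
  rw [abs_le]
  constructor <;> linarith


section Types
variable {𝒳 : Type*} [Fintype 𝒳] {n : ℕ}

/-- The empirical type (occurrence counts) of a sequence. -/
noncomputable def typeOf (x : Fin n → 𝒳) (a : 𝒳) : ℕ :=
  open Classical in (Finset.univ.filter (fun i => x i = a)).card

/-- The type class of a sequence: all sequences with the same empirical type. -/
noncomputable def typeClass (x : Fin n → 𝒳) : Finset (Fin n → 𝒳) :=
  open Classical in Finset.univ.filter (fun y => typeOf y = typeOf x)

lemma mem_typeClass {x y : Fin n → 𝒳} : y ∈ typeClass x ↔ typeOf y = typeOf x := by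
  classical
  simp [typeClass]

lemma self_mem_typeClass (x : Fin n → 𝒳) : x ∈ typeClass x := mem_typeClass.mpr rfl

lemma typeClass_eq {x y : Fin n → 𝒳} (h : y ∈ typeClass x) : typeClass y = typeClass x := by
  classical
  rw [mem_typeClass] at h
  unfold typeClass
  rw [h]

lemma prod_eq_prod_pow_typeOf (x : Fin n → 𝒳) (g : 𝒳 → ℝ) :
    ∏ i, g (x i) = ∏ a, g a ^ typeOf x a := by
  classical
  rw [← Finset.prod_fiberwise Finset.univ x (fun i => g (x i))]
  refine Finset.prod_congr rfl fun a _ => ?_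
  have h : ∀ i ∈ Finset.univ.filter (fun i => x i = a), g (x i) = g a := fun i hi => by
    rw [(Finset.mem_filter.mp hi).2]
  rw [Finset.prod_congr rfl h, Finset.prod_const, typeOf]

lemma typeOf_le (x : Fin n → 𝒳) (a : 𝒳) : typeOf x a ≤ n := by
  classical
  exact (Finset.card_filter_le Finset.univ (fun i => x i = a)).trans_eq (by simp)

lemma card_typesImage :
    ((Finset.univ : Finset (Fin n → 𝒳)).image typeOf).card ≤ (n + 1) ^ Fintype.card 𝒳 := by
  classical
  have : ((n : ℕ) + 1) ^ Fintype.card 𝒳 = Fintype.card (𝒳 → Fin (n + 1)) := by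
    rw [Fintype.card_fun, Fintype.card_fin]
  rw [this, ← Finset.card_univ]
  refine Finset.card_le_card_of_injOn
    (fun t => fun a => (⟨min (t a) n, by omega⟩ : Fin (n + 1)))
    (fun _ _ => Finset.mem_univ _) ?_
  intro t ht t' ht' hmin
  have hb : ∀ u ∈ (Finset.univ : Finset (Fin n → 𝒳)).image typeOf, ∀ a, u a ≤ n := by
    intro u hu a
    rw [Finset.mem_image] at hu
    obtain ⟨x, _, rfl⟩ := hu
    exact typeOf_le x a
  funext a
  have := congrFun hmin a
  have h1 := hb t ht a
  have h2 := hb t' ht' a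
  rw [Fin.mk.injEq, min_eq_left h1, min_eq_left h2] at this
  exact this

end Types

lemma measure_finset_toReal {α : Type*} [MeasurableSpace α] [MeasurableSingletonClass α]
    (μ : Measure α) [IsFiniteMeasure μ] (A : Finset α) :
    (μ ↑A).toReal = ∑ s ∈ A, (μ {s}).toReal := by
  classical
  have h1 : μ ↑A = ∑ s ∈ A, μ {s} := by
    have hu : (↑A : Set α) = ⋃ s ∈ A, {s} := by
      ext y; simp
    rw [hu, measure_biUnion_finset ?_ (fun s _ => measurableSet_singleton s)]
    intro x hx y hy hxy
    simp only [Function.onFun, Set.disjoint_singleton]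
    exact hxy
  rw [h1, ENNReal.toReal_sum (fun s _ => measure_ne_top μ {s})]


/-- Type-based universal simulation from i.i.d. finite sources: there is a simulator
`f : 𝒳ⁿ → ℝ` constructed without knowledge of `P_X` whose output KS error is at most
`(1/2)(n+1)^{|𝒳|}(max_x P_X(x))ⁿ` for every source distribution `P_X`. -/
theorem universal_simulation_finite_iid
    (𝒳 : Type*) [Fintype 𝒳] [MeasurableSpace 𝒳] [MeasurableSingletonClass 𝒳]
    (Q : Measure ℝ) [IsProbabilityMeasure Q] [NullSingletonClass Q] (n : ℕ) :
    ∃ f : (Fin n → 𝒳) → ℝ, Measurable f ∧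
      ∀ P : Measure 𝒳, IsProbabilityMeasure P →
        KSdist ((Measure.pi fun _ : Fin n => P).map f) Q ≤
          (1 / 2) * ((n : ℝ) + 1) ^ (Fintype.card 𝒳) * (⨆ x : 𝒳, (P {x}).toReal) ^ n := by
  classical
  -- enumeration of sequences
  set enc : (Fin n → 𝒳) → ℕ := fun y => ((Fintype.equivFin (Fin n → 𝒳)) y : ℕ) with henc_def
  have henc : Function.Injective enc := fun a b h =>
    (Fintype.equivFin (Fin n → 𝒳)).injective (Fin.val_injective h)
  -- the simulator
  set mcl : (Fin n → 𝒳) → ℕ := fun x => (typeClass x).card with hmcl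
  set rk : (Fin n → 𝒳) → ℕ := fun x => ((typeClass x).filter (fun y => enc y < enc x)).card
    with hrk
  set f : (Fin n → 𝒳) → ℝ :=
    fun x => quantile' Q ((2 * (rk x : ℝ) + 1) / (2 * (mcl x : ℝ))) with hf_def
  have hf_meas : Measurable f := measurable_of_countable f
  refine ⟨f, hf_meas, ?_⟩
  intro P hP
  -- the alphabet is nonempty
  have hX : Nonempty 𝒳 := by
    by_contra h
    have h1 : (Set.univ : Set 𝒳) = ∅ := Set.univ_eq_empty_iff.mpr (not_nonempty_iff.mp h)
    have h2 := measure_univ (μ := P)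
    rw [h1] at h2
    simp at h2
  set Pn : Measure (Fin n → 𝒳) := Measure.pi fun _ : Fin n => P with hPn
  haveI : IsProbabilityMeasure Pn := by infer_instance
  set w : (Fin n → 𝒳) → ℝ := fun s => (Pn {s}).toReal with hw
  set pmax : ℝ := ⨆ x : 𝒳, (P {x}).toReal with hpmax
  have hpt_nonneg : ∀ a : 𝒳, (0 : ℝ) ≤ (P {a}).toReal := fun a => ENNReal.toReal_nonneg
  have hple : ∀ a : 𝒳, (P {a}).toReal ≤ pmax := by
    intro a
    rw [hpmax]
    exact le_ciSup (f := fun x : 𝒳 => (P {x}).toReal)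
      (Set.Finite.bddAbove (Set.finite_range _)) a
  have hpmax_nonneg : 0 ≤ pmax := (hpt_nonneg (Classical.arbitrary 𝒳)).trans
    (hple (Classical.arbitrary 𝒳))
  have hw_prod : ∀ s, w s = ∏ i, (P {s i}).toReal := by
    intro s
    show (Pn {s}).toReal = _
    have : Pn {s} = ∏ i, P {s i} := by
      rw [← Set.univ_pi_singleton s, hPn, Measure.pi_pi]
    rw [this, ENNReal.toReal_prod]
  have hw_nonneg : ∀ s, 0 ≤ w s := fun s => ENNReal.toReal_nonneg
  have hw_const : ∀ s s' : Fin n → 𝒳, typeOf s = typeOf s' → w s = w s' := by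
    intro s s' h
    rw [hw_prod, hw_prod, prod_eq_prod_pow_typeOf s (fun a => (P {a}).toReal),
      prod_eq_prod_pow_typeOf s' (fun a => (P {a}).toReal), h]
  have hw_le : ∀ s, w s ≤ pmax ^ n := by
    intro s
    rw [hw_prod]
    calc ∏ i, (P {s i}).toReal ≤ ∏ _i : Fin n, pmax :=
          Finset.prod_le_prod (fun i _ => hpt_nonneg (s i)) (fun i _ => hple (s i))
      _ = pmax ^ n := by rw [Finset.prod_const]; simp
  have hsum_univ : ∑ s : Fin n → 𝒳, w s = 1 := by
    have := measure_finset_toReal Pn Finset.univ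
    rw [Finset.coe_univ, measure_univ] at this
    simpa using this.symm
  -- pointwise bound on the cdf difference
  have key : ∀ x0 : ℝ, |cdfR (Pn.map f) x0 - cdfR Q x0| ≤
      (1 / 2) * ((n : ℝ) + 1) ^ (Fintype.card 𝒳) * pmax ^ n := by
    intro x0
    set F := cdfR Q x0 with hF
    set A : Finset (Fin n → 𝒳) := Finset.univ.filter (fun s => f s ≤ x0) with hA
    have h1 : cdfR (Pn.map f) x0 = ∑ s ∈ A, w s := by
      rw [cdfR, Measure.map_apply hf_meas measurableSet_Iic]
      have hpre : f ⁻¹' (Set.Iic x0) = ↑A := by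
        ext s; simp [hA]
      rw [hpre, measure_finset_toReal]
    set 𝒯 : Finset (𝒳 → ℕ) := Finset.univ.image typeOf with hT
    have hsplitA : ∑ s ∈ A, w s = ∑ t ∈ 𝒯, ∑ s ∈ A.filter (fun s => typeOf s = t), w s :=
      (Finset.sum_fiberwise_of_maps_to
        (fun s _ => Finset.mem_image_of_mem typeOf (Finset.mem_univ s)) w).symm
    have hsplitU : (1 : ℝ) =
        ∑ t ∈ 𝒯, ∑ s ∈ Finset.univ.filter (fun s => typeOf s = t), w s := by
      rw [Finset.sum_fiberwise_of_maps_to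
        (fun s _ => Finset.mem_image_of_mem typeOf (Finset.mem_univ s)) w, hsum_univ]
    -- per-type bound
    have hterm : ∀ t ∈ 𝒯,
        |(∑ s ∈ A.filter (fun s => typeOf s = t), w s) -
          F * ∑ s ∈ Finset.univ.filter (fun s => typeOf s = t), w s| ≤ pmax ^ n * (1 / 2) := by
      intro t ht
      rw [Finset.mem_image] at ht
      obtain ⟨z, _, rfl⟩ := ht
      set T : Finset (Fin n → 𝒳) := typeClass z with hTz
      have hmT : 0 < T.card := Finset.card_pos.mpr ⟨z, self_mem_typeClass z⟩
      set p : ℕ → Prop :=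
        fun k => quantile' Q ((2 * (k : ℝ) + 1) / (2 * (T.card : ℝ))) ≤ x0 with hp_def
      -- identify fibers
      have hfibU : Finset.univ.filter (fun s => typeOf s = typeOf z) = T := by
        ext y
        simp [hTz, mem_typeClass]
      have hfibA : A.filter (fun s => typeOf s = typeOf z) = T.filter (fun s => f s ≤ x0) := by
        ext y
        simp only [hA, Finset.mem_filter, Finset.mem_univ, true_and, hTz, mem_typeClass]
        tauto
      -- constant weight on the type class
      have hwT : ∀ s ∈ T, w s = w z := fun s hs => hw_const s z (mem_typeClass.mp hs)
      have hsumU : ∑ s ∈ T, w s = (T.card : ℝ) * w z := by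
        rw [Finset.sum_congr rfl hwT, Finset.sum_const, nsmul_eq_mul]
      -- count in the filtered type class
      have hcount : (T.filter (fun s => f s ≤ x0)).card
          = ((Finset.range T.card).filter p).card := by
        have hcongr : T.filter (fun s => f s ≤ x0)
            = T.filter (fun s => p ((T.filter (fun y => enc y < enc s)).card)) := by
          refine Finset.filter_congr ?_
          intro s hs
          have hTs : typeClass s = T := typeClass_eq hs
          rw [hf_def, hp_def]
          simp only [hrk, hmcl, hTs]
        rw [hcongr, count_rank enc henc T p]
      have hsumA : ∑ s ∈ T.filter (fun s => f s ≤ x0), w s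
          = (((Finset.range T.card).filter p).card : ℝ) * w z := by
        rw [Finset.sum_congr rfl (fun s hs => hwT s (Finset.mem_filter.mp hs).1),
          Finset.sum_const, nsmul_eq_mul, hcount]
      have hsq := count_quantile Q x0 hmT p (fun k => Iff.rfl)
      rw [hfibU, hfibA, hsumU, hsumA]
      have hwz : 0 ≤ w z := hw_nonneg z
      have hwzle : w z ≤ pmax ^ n := hw_le z
      have hfac : (((Finset.range T.card).filter p).card : ℝ) * w z - F * ((T.card : ℝ) * w z)
          = w z * ((((Finset.range T.card).filter p).card : ℝ) - (T.card : ℝ) * F) := by ring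
      rw [hfac, abs_mul, abs_of_nonneg hwz]
      calc w z * |(((Finset.range T.card).filter p).card : ℝ) - (T.card : ℝ) * F|
          ≤ w z * (1 / 2) := by
            apply mul_le_mul_of_nonneg_left _ hwz
            exact hsq
        _ ≤ pmax ^ n * (1 / 2) := by linarith
    -- sum up
    have hTcard : (𝒯.card : ℝ) ≤ ((n : ℝ) + 1) ^ (Fintype.card 𝒳) := by
      have := card_typesImage (𝒳 := 𝒳) (n := n)
      calc (𝒯.card : ℝ) ≤ ((n + 1 : ℕ) ^ (Fintype.card 𝒳) : ℕ) := by exact_mod_cast this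
        _ = ((n : ℝ) + 1) ^ (Fintype.card 𝒳) := by push_cast; ring
    calc |cdfR (Pn.map f) x0 - cdfR Q x0|
        = |∑ t ∈ 𝒯, ((∑ s ∈ A.filter (fun s => typeOf s = t), w s) -
            F * ∑ s ∈ Finset.univ.filter (fun s => typeOf s = t), w s)| := by
          rw [h1, hsplitA, Finset.sum_sub_distrib, ← Finset.mul_sum, ← hsplitU, mul_one, hF]
      _ ≤ ∑ t ∈ 𝒯, |(∑ s ∈ A.filter (fun s => typeOf s = t), w s) -
            F * ∑ s ∈ Finset.univ.filter (fun s => typeOf s = t), w s| :=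
          Finset.abs_sum_le_sum_abs _ _
      _ ≤ ∑ _t ∈ 𝒯, pmax ^ n * (1 / 2) := Finset.sum_le_sum hterm
      _ = (𝒯.card : ℝ) * (pmax ^ n * (1 / 2)) := by rw [Finset.sum_const, nsmul_eq_mul]
      _ ≤ (1 / 2) * ((n : ℝ) + 1) ^ (Fintype.card 𝒳) * pmax ^ n := by
          have hpow : (0 : ℝ) ≤ pmax ^ n := pow_nonneg hpmax_nonneg n
          have hTnn : (0 : ℝ) ≤ (𝒯.card : ℝ) := Nat.cast_nonneg _
          nlinarith
  rw [KSdist]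
  exact ciSup_le key
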